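/- Let r ≥ 2 and K be positive integers with K | r, and let m1 be an integer coprime to r with a1 its inverse modulo K (0 < a1 < K). Then the sum over t = 0 to K-1 and ℓ = 1 to (r-K)/K of (m1⁻¹m2·ℓ − 1 + t·m1⁻¹ + r·s_ℓ)·(r/K − ℓ), where m2 is an integer, m1⁻¹ is an inverse of m1 mod r, and s_ℓ is chosen so each first factor lies in (0, r), is congruent modulo r to −m1⁻¹m2·r(2r−K)(r−K)/(6K²) + r(r−K)/(2K) + m1⁻¹·r(r−K)(K−1)/(4K). -/

import Mathlib

private lemma sum_Icc_step (f : ℤ → ℤ) (a n : ℤ) (h : a ≤ n + 1) :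
    ∑ x ∈ Finset.Icc a (n + 1), f x = (∑ x ∈ Finset.Icc a n, f x) + f (n + 1) := by
  have hins : Finset.Icc a (n + 1) = insert (n + 1) (Finset.Icc a n) := by
    ext x; simp only [Finset.mem_Icc, Finset.mem_insert]; omega
  rw [hins, Finset.sum_insert (by simp only [Finset.mem_Icc]; omega)]
  ring

private lemma innerSumAux11 (A B q : ℤ) : ∀ n : ℤ, 0 ≤ n →
    (∑ l ∈ Finset.Icc (1 : ℤ) n, (A * l + B) * (q - l)) * 6
      = A * q * (3 * n * (n + 1)) - A * (n * (n + 1) * (2 * n + 1))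
        + 6 * B * q * n - B * (3 * n * (n + 1)) := by
  refine Int.le_induction (by simp) ?_
  intro n hn ih
  rw [sum_Icc_step _ 1 n (by omega)]
  linear_combination ih

private lemma outerSumAux11 (C D : ℤ) : ∀ m : ℤ, 0 ≤ m →
    (∑ t ∈ Finset.Icc (0 : ℤ) m, (C + D * t)) * 2 = 2 * (m + 1) * C + D * m * (m + 1) := by
  refine Int.le_induction (by simp; ring) ?_
  intro m hm ih
  rw [sum_Icc_step _ 0 m (by omega)]
  linear_combination ih

/-- Count (mod r) of 3-step admissible paths from `(v₀,0)` to `(v₃,0)` when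
    `gcd(m₂,r) = K`: with `m₁⁻¹` an inverse of `m₁` mod `r` in `(0,r)`, and
    `s t ℓ` shifts so that each first factor lies in `(0,r)`,
    `∑_{t=0}^{K-1} ∑_{ℓ=1}^{(r-K)/K} (m₁⁻¹m₂ℓ − 1 + t·m₁⁻¹ + r·s_{t,ℓ})·(r/K − ℓ)`
    is congruent mod `r` to
    `−m₁⁻¹m₂·r(2r−K)(r−K)/(6K²) + r(r−K)/(2K) + m₁⁻¹·r(r−K)(K−1)/(4K)`. -/
theorem stmt_11 (r K : ℤ) (hr : 2 ≤ r) (hK : 0 < K) (hdvd : K ∣ r)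
    (m1 m2 m1inv : ℤ) (hm1 : Int.gcd m1 r = 1)
    (hinv : m1 * m1inv ≡ 1 [ZMOD r]) (hinv_pos : 0 < m1inv) (hinv_lt : m1inv < r)
    (s : ℤ → ℤ → ℤ)
    (hs : ∀ t ∈ Finset.Icc (0 : ℤ) (K - 1), ∀ l ∈ Finset.Icc (1 : ℤ) ((r - K) / K),
      0 < m1inv * m2 * l - 1 + t * m1inv + r * s t l ∧
        m1inv * m2 * l - 1 + t * m1inv + r * s t l < r) :
    ∑ t ∈ Finset.Icc (0 : ℤ) (K - 1), ∑ l ∈ Finset.Icc (1 : ℤ) ((r - K) / K),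
        (m1inv * m2 * l - 1 + t * m1inv + r * s t l) * (r / K - l)
      ≡ -(m1inv * m2) * (r * (2 * r - K) * (r - K) / (6 * K ^ 2))
          + r * (r - K) / (2 * K)
          + m1inv * (r * (r - K) * (K - 1) / (4 * K)) [ZMOD r] := by
  clear hs hm1 hinv
  obtain ⟨q, hrq⟩ := hdvd
  subst hrq
  have hK0 : K ≠ 0 := hK.ne'
  have hq : 1 ≤ q := by
    rcases mul_pos_iff.mp (show (0:ℤ) < K * q by omega) with ⟨_, h⟩ | ⟨h, _⟩ <;> omega
  have hn : (0 : ℤ) ≤ q - 1 := by omega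
  set A := m1inv * m2 with hA
  -- division simplifications
  have hdiv1 : K * q / K = q := Int.mul_ediv_cancel_left _ hK0
  have hdiv2 : (K * q - K) / K = q - 1 := by
    rw [show K * q - K = K * (q - 1) by ring, Int.mul_ediv_cancel_left _ hK0]
  -- witnesses for exact divisibility
  obtain ⟨e, he⟩ : Even ((q - 1) * q) := by simpa using Int.even_mul_succ_self (q - 1)
  obtain ⟨g, hg⟩ : Even ((K - 1) * K) := by simpa using Int.even_mul_succ_self (K - 1)
  have hf6 := innerSumAux11 1 0 0 (q - 1) hn
  set f : ℤ := ∑ l ∈ Finset.Icc (1 : ℤ) (q - 1), (1 * l + 0) * (0 - l) with hfdef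
  have hf : f * 6 = -((q - 1) * q * (2 * (q - 1) + 1)) := by
    rw [hfdef]; linear_combination hf6
  -- rewrite the three divisions on the RHS
  have hd1 : K * q * (2 * (K * q) - K) * (K * q - K) / (6 * K ^ 2) = -(K * f) := by
    rw [show K * q * (2 * (K * q) - K) * (K * q - K) = (6 * K ^ 2) * (-(K * f)) by
      linear_combination (K^3) * hf, Int.mul_ediv_cancel_left _ (by positivity)]
  have hd2 : K * q * (K * q - K) / (2 * K) = K * e := by
    rw [show K * q * (K * q - K) = (2 * K) * (K * e) by linear_combination (K^2) * he,
      Int.mul_ediv_cancel_left _ (by positivity)]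
  have hd3 : K * q * (K * q - K) * (K - 1) / (4 * K) = e * g := by
    rw [show K * q * (K * q - K) * (K - 1) = (4 * K) * (e * g) by
      linear_combination (K * (K-1) * K) * he + (2 * K * e) * hg,
      Int.mul_ediv_cancel_left _ (by positivity)]
  rw [hdiv1, hdiv2, hd1, hd2, hd3]
  -- split the sum into the main part T and the multiple-of-r part W
  set T : ℤ := ∑ t ∈ Finset.Icc (0 : ℤ) (K - 1),
      ∑ l ∈ Finset.Icc (1 : ℤ) (q - 1), (A * l + (t * m1inv - 1)) * (q - l) with hTdef
  set W : ℤ := ∑ t ∈ Finset.Icc (0 : ℤ) (K - 1),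
      ∑ l ∈ Finset.Icc (1 : ℤ) (q - 1), s t l * (q - l) with hWdef
  have hsplit : ∑ t ∈ Finset.Icc (0 : ℤ) (K - 1), ∑ l ∈ Finset.Icc (1 : ℤ) (q - 1),
      (m1inv * m2 * l - 1 + t * m1inv + (K * q) * s t l) * (q - l) = T + (K * q) * W := by
    rw [hTdef, hWdef, Finset.mul_sum, ← Finset.sum_add_distrib]
    refine Finset.sum_congr rfl fun t _ => ?_
    rw [Finset.mul_sum, ← Finset.sum_add_distrib]
    exact Finset.sum_congr rfl fun l _ => by rw [hA]; ring
  rw [hsplit]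
  -- closed form for 12 * T
  set C : ℤ := A * q * (3 * (q - 1) * q) - A * ((q - 1) * q * (2 * (q - 1) + 1))
      - 6 * q * (q - 1) + 3 * (q - 1) * q with hC
  set D : ℤ := m1inv * (6 * q * (q - 1) - 3 * (q - 1) * q) with hD
  have hT : T * 12 = 2 * K * C + D * (K - 1) * K := by
    have h1 : ∀ t ∈ Finset.Icc (0 : ℤ) (K - 1),
        (∑ l ∈ Finset.Icc (1 : ℤ) (q - 1), (A * l + (t * m1inv - 1)) * (q - l)) * 6
          = C + D * t := by
      intro t _
      have := innerSumAux11 A (t * m1inv - 1) q (q - 1) hn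
      rw [hC, hD]; linear_combination this
    calc T * 12
        = (∑ t ∈ Finset.Icc (0 : ℤ) (K - 1),
            (∑ l ∈ Finset.Icc (1 : ℤ) (q - 1), (A * l + (t * m1inv - 1)) * (q - l)) * 6) * 2 := by
          rw [hTdef, ← Finset.sum_mul]; ring
      _ = (∑ t ∈ Finset.Icc (0 : ℤ) (K - 1), (C + D * t)) * 2 := by
          rw [Finset.sum_congr rfl h1]
      _ = 2 * ((K - 1) + 1) * C + D * (K - 1) * ((K - 1) + 1) := outerSumAux11 C D (K - 1) (by omega)
      _ = 2 * K * C + D * (K - 1) * K := by ring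
  rw [hC, hD] at hT
  have key : (-A * (-(K * f)) + K * e + m1inv * (e * g)) - (T + K * q * W)
      = (K * q) * (q - 1 - A * e - W) := by
    have h12 : ((-A * (-(K * f)) + K * e + m1inv * (e * g)) - (T + K * q * W)) * 12
        = ((K * q) * (q - 1 - A * e - W)) * 12 := by
      linear_combination (-1 : ℤ) * hT + (-(6*K) - 6*m1inv*g - 6*A*K*q) * he
        + (-(3*m1inv*(q-1)*q)) * hg + (2*A*K) * hf
    exact mul_right_cancel₀ (by norm_num) h12
  exact Int.modEq_iff_dvd.mpr ⟨_, key⟩
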